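/- Let $L \in \mathbb{N}$, let $a, q_1, \ldots, q_L \in \mathbb{R}^d$ be vectors, and let $b, p_1, \ldots, p_L > 0$ be positive reals. Suppose for each $i \in [L]$ that $\|a/b - (q_i + a)/(p_i + b)\| = \epsilon_i$ for some norm $\|\cdot\|$ on $\mathbb{R}^d$. Then $\|a/b - (\sum_{i=1}^L q_i + a)/(\sum_{i=1}^L p_i + b)\| \le \sum_{i=1}^L \epsilon_i$. -/

import Mathlib

/-- If `‖a/b - (qᵢ+a)/(pᵢ+b)‖ = εᵢ` for each `i ∈ [L]`, with `b, pᵢ > 0`,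
then `‖a/b - (∑qᵢ+a)/(∑pᵢ+b)‖ ≤ ∑εᵢ`. -/
theorem stmt_0 {E : Type*} [NormedAddCommGroup E] [NormedSpace ℝ E]
    (L : ℕ) (a : E) (q : Fin L → E) (b : ℝ) (p : Fin L → ℝ) (ε : Fin L → ℝ)
    (hb : 0 < b) (hp : ∀ i, 0 < p i)
    (h : ∀ i, ‖b⁻¹ • a - (p i + b)⁻¹ • (q i + a)‖ = ε i) :
    ‖b⁻¹ • a - ((∑ i, p i) + b)⁻¹ • ((∑ i, q i) + a)‖ ≤ ∑ i, ε i := by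
  set P := ∑ i, p i with hP
  have hPnn : 0 ≤ P := Finset.sum_nonneg fun i _ => (hp i).le
  have hPb : 0 < P + b := by positivity
  have hterm : ∀ i, ((p i + b)/(P+b)) • (b⁻¹ • a - (p i + b)⁻¹ • (q i + a))
      = ((p i + b)/((P+b)*b)) • a - (P+b)⁻¹ • q i - (P+b)⁻¹ • a := by
    intro i
    have hpi : (0:ℝ) < p i + b := by have := hp i; linarith
    rw [smul_sub, smul_smul, smul_smul, smul_add]
    have h1 : (p i + b)/(P+b) * b⁻¹ = (p i + b)/((P+b)*b) := by
      field_simp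
    have h2 : (p i + b)/(P+b) * (p i + b)⁻¹ = (P+b)⁻¹ := by
      field_simp
    rw [h1, h2]
    abel
  have hsumc : ∑ i, ((p i + b)/((P+b)*b)) = (P + L*b)/((P+b)*b) := by
    rw [← Finset.sum_div, Finset.sum_add_distrib, Finset.sum_const]
    simp [hP.symm, mul_comm]
  have key : b⁻¹ • a - (P + b)⁻¹ • ((∑ i, q i) + a)
      = ∑ i, ((p i + b)/(P+b)) • (b⁻¹ • a - (p i + b)⁻¹ • (q i + a)) := by
    rw [Finset.sum_congr rfl fun i _ => hterm i]
    rw [Finset.sum_sub_distrib, Finset.sum_sub_distrib, ← Finset.sum_smul,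
      ← Finset.smul_sum, Finset.sum_const, hsumc]
    rw [smul_add]
    match_scalars
    · field_simp
      rw [Finset.card_univ, Fintype.card_fin]
      ring
    · ring
  rw [key]
  calc ‖∑ i, ((p i + b)/(P+b)) • (b⁻¹ • a - (p i + b)⁻¹ • (q i + a))‖
      ≤ ∑ i, ‖((p i + b)/(P+b)) • (b⁻¹ • a - (p i + b)⁻¹ • (q i + a))‖ :=
        norm_sum_le _ _
    _ ≤ ∑ i, ε i := by
        apply Finset.sum_le_sum
        intro i _
        rw [norm_smul, h i]
        have hε : 0 ≤ ε i := by rw [← h i]; exact norm_nonneg _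
        have hpi : (0:ℝ) < p i + b := by have := hp i; linarith
        have hle : (p i + b)/(P+b) ≤ 1 := by
          rw [div_le_one hPb]
          have : p i ≤ P := Finset.single_le_sum (fun j _ => (hp j).le) (Finset.mem_univ i)
          linarith
        have : ‖(p i + b)/(P+b)‖ = (p i + b)/(P+b) := by
          rw [Real.norm_eq_abs, abs_of_pos (div_pos hpi hPb)]
        rw [this]
        nlinarith
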